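/- Fix θ ∈ (0,1). Then, as n → ∞, Σ_{k=1}^{n} C(n,k) θ^k (1−θ)^{n−k} · ln k = ln(θn) + (θ−1)/(2θn) − (θ²−6θ+5)/(12θ²n²) + O(1/n³); that is, there exist C > 0 and N such that for all n ≥ N the absolute difference between the sum and the displayed three-term expression is at most C/n³. -/

import Mathlib

set_option maxHeartbeats 1000000

open Finset Real

noncomputable section

noncomputable def bwt (θ : ℝ) (n k : ℕ) : ℝ := (n.choose k : ℝ) * θ^k * (1-θ)^(n-k)

lemma castff (k : ℕ) : ∀ j : ℕ, (∏ i ∈ range j, ((k:ℝ) - i)) = (k.choose j : ℝ) * (Nat.factorial j : ℝ) := by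
  intro j
  induction j with
  | zero => simp
  | succ j ih =>
    rw [Finset.prod_range_succ, ih]
    have h := Nat.choose_succ_right_eq k j
    by_cases hk : j ≤ k
    · have : ((k - j : ℕ) : ℝ) = (k:ℝ) - j := by
        push_cast [hk]; ring
      have h2 : ((k.choose (j+1) : ℕ) : ℝ) * (j+1) = (k.choose j : ℝ) * ((k:ℝ) - j) := by
        rw [← this]; exact_mod_cast congrArg (Nat.cast (R := ℝ)) h
      rw [Nat.factorial_succ]
      push_cast
      nlinarith [h2]
    · push_neg at hk
      have h1 : k.choose (j+1) = 0 := Nat.choose_eq_zero_of_lt (by omega)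
      have h2 : k.choose j = 0 ∨ k = j := by
        rcases Nat.lt_or_ge k j with h | h
        · exact Or.inl (Nat.choose_eq_zero_of_lt h)
        · right; omega
      rcases h2 with h2 | h2
      · simp [h1, h2]
      · subst h2; simp [h1]

lemma sumF (p q : ℝ) (h : p + q = 1) (n j : ℕ) :
    ∑ k ∈ range (n+1), (n.choose k : ℝ) * p^k * q^(n-k) * (∏ i ∈ range j, ((k:ℝ) - i)) =
    (∏ i ∈ range j, ((n:ℝ) - i)) * p^j := by
  by_cases hj : j ≤ n
  · -- rewrite products via castff
    have key : ∑ k ∈ range (n+1), (n.choose k : ℝ) * p^k * q^(n-k) * ((k.choose j : ℝ) * (Nat.factorial j : ℝ)) =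
        (n.choose j : ℝ) * (Nat.factorial j : ℝ) * p^j := by
      have hsub : Finset.Ico j (n+1) ⊆ range (n+1) := by
        rw [Finset.range_eq_Ico]; exact Finset.Ico_subset_Ico (Nat.zero_le _) le_rfl
      rw [← Finset.sum_subset hsub (fun k hk hk2 => by
        have : k < j := by
          simp [Finset.mem_range] at hk; simp [Finset.mem_Ico] at hk2; omega
        simp [Nat.choose_eq_zero_of_lt this])]
      rw [Finset.sum_Ico_eq_sum_range]
      have hrw : ∀ i ∈ range (n+1-j), (n.choose (j+i) : ℝ) * p^(j+i) * q^(n-(j+i)) * ((( j+i).choose j : ℝ) * (Nat.factorial j : ℝ)) =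
          ((n.choose j : ℝ) * (Nat.factorial j : ℝ) * p^j) * (((n-j).choose i : ℝ) * p^i * q^((n-j)-i)) := by
        intro i hi
        simp only [Finset.mem_range] at hi
        have hin : j + i ≤ n := by omega
        have hc := Nat.choose_mul (n := n) (k := j+i) (s := j) (Nat.le_add_right _ _)
        have hc' : ((n.choose (j+i) : ℕ) : ℝ) * ((j+i).choose j : ℝ) = (n.choose j : ℝ) * ((n-j).choose ((j+i)-j) : ℝ) := by
          exact_mod_cast congrArg (Nat.cast (R := ℝ)) hc
        have hji : (j+i) - j = i := by omega
        rw [hji] at hc'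
        have hq : n - (j+i) = (n-j) - i := by omega
        rw [hq, pow_add]
        linear_combination (q^((n-j)-i) * p^j * p^i * (Nat.factorial j : ℝ)) * hc'
      rw [Finset.sum_congr rfl hrw, ← Finset.mul_sum]
      have hb : ∑ i ∈ range (n+1-j), ((n-j).choose i : ℝ) * p^i * q^((n-j)-i) = 1 := by
        rw [show n+1-j = (n-j)+1 by omega]
        calc ∑ i ∈ range ((n-j)+1), ((n-j).choose i : ℝ) * p^i * q^((n-j)-i)
            = ∑ i ∈ range ((n-j)+1), p^i * q^((n-j)-i) * ((n-j).choose i : ℝ) :=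
              Finset.sum_congr rfl (fun i _ => by ring)
          _ = (p+q)^(n-j) := (add_pow p q (n-j)).symm
          _ = 1 := by rw [h, one_pow]
      rw [hb, mul_one]
    calc ∑ k ∈ range (n+1), (n.choose k : ℝ) * p^k * q^(n-k) * (∏ i ∈ range j, ((k:ℝ) - i))
        = ∑ k ∈ range (n+1), (n.choose k : ℝ) * p^k * q^(n-k) * ((k.choose j : ℝ) * (Nat.factorial j : ℝ)) := by
          exact Finset.sum_congr rfl (fun k _ => by rw [castff])
      _ = (n.choose j : ℝ) * (Nat.factorial j : ℝ) * p^j := key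
      _ = (∏ i ∈ range j, ((n:ℝ) - i)) * p^j := by rw [castff]
  · push_neg at hj
    have h1 : ∀ k ∈ range (n+1), (n.choose k : ℝ) * p^k * q^(n-k) * (∏ i ∈ range j, ((k:ℝ) - i)) = 0 := by
      intro k hk
      simp only [Finset.mem_range] at hk
      have : (∏ i ∈ range j, ((k:ℝ) - i)) = 0 :=
        Finset.prod_eq_zero (i := k) (Finset.mem_range.2 (by omega)) (by ring)
      rw [this, mul_zero]
    rw [Finset.sum_eq_zero h1]
    have : (∏ i ∈ range j, ((n:ℝ) - i)) = 0 :=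
      Finset.prod_eq_zero (i := n) (Finset.mem_range.2 (by omega)) (by ring)
    rw [this, zero_mul]

lemma sum_p5 (p q : ℝ) (h : p + q = 1) (n : ℕ) :
    ∑ k ∈ range (n+1), (n.choose k : ℝ) * p^k * q^(n-k) * (60*(p*(n:ℝ))^4*((k:ℝ) - p*(n:ℝ)) - 30*(p*(n:ℝ))^3*((k:ℝ) - p*(n:ℝ))^2 + 20*(p*(n:ℝ))^2*((k:ℝ) - p*(n:ℝ))^3 - 15*(p*(n:ℝ))*((k:ℝ) - p*(n:ℝ))^4 + 12*((k:ℝ) - p*(n:ℝ))^5) = 30*(n:ℝ)^4*p^5 + (-30)*(n:ℝ)^4*p^4 + (-5)*(n:ℝ)^3*p^5 + 30*(n:ℝ)^3*p^4 + (-25)*(n:ℝ)^3*p^3 + (-150)*(n:ℝ)^2*p^5 + 420*(n:ℝ)^2*p^4 + (-375)*(n:ℝ)^2*p^3 + 105*(n:ℝ)^2*p^2 + 288*(n:ℝ)*p^5 + (-720)*(n:ℝ)*p^4 + 600*(n:ℝ)*p^3 + (-180)*(n:ℝ)*p^2 + 12*(n:ℝ)*p := by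
  calc ∑ k ∈ range (n+1), (n.choose k : ℝ) * p^k * q^(n-k) * (60*(p*(n:ℝ))^4*((k:ℝ) - p*(n:ℝ)) - 30*(p*(n:ℝ))^3*((k:ℝ) - p*(n:ℝ))^2 + 20*(p*(n:ℝ))^2*((k:ℝ) - p*(n:ℝ))^3 - 15*(p*(n:ℝ))*((k:ℝ) - p*(n:ℝ))^4 + 12*((k:ℝ) - p*(n:ℝ))^5)
      = ∑ k ∈ range (n+1), (((-137)*(n:ℝ)^5*p^5) * ((n.choose k : ℝ) * p^k * q^(n-k) * (∏ i ∈ range 0, ((k:ℝ) - i))) + (300*(n:ℝ)^4*p^4 + (-300)*(n:ℝ)^3*p^3 + 200*(n:ℝ)^2*p^2 + (-75)*(n:ℝ)*p + 12) * ((n.choose k : ℝ) * p^k * q^(n-k) * (∏ i ∈ range 1, ((k:ℝ) - i))) + ((-300)*(n:ℝ)^3*p^3 + 600*(n:ℝ)^2*p^2 + (-525)*(n:ℝ)*p + 180) * ((n.choose k : ℝ) * p^k * q^(n-k) * (∏ i ∈ range 2, ((k:ℝ) - i))) + (200*(n:ℝ)^2*p^2 + (-450)*(n:ℝ)*p + 300)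 * ((n.choose k : ℝ) * p^k * q^(n-k) * (∏ i ∈ range 3, ((k:ℝ) - i))) + ((-75)*(n:ℝ)*p + 120) * ((n.choose k : ℝ) * p^k * q^(n-k) * (∏ i ∈ range 4, ((k:ℝ) - i))) + (12) * ((n.choose k : ℝ) * p^k * q^(n-k) * (∏ i ∈ range 5, ((k:ℝ) - i)))) := by
        refine Finset.sum_congr rfl (fun k _ => ?_)
        simp only [Finset.prod_range_succ, Finset.prod_range_zero, one_mul]
        push_cast
        ring
    _ = ((-137)*(n:ℝ)^5*p^5) * (∑ k ∈ range (n+1), (n.choose k : ℝ) * p^k * q^(n-k) * (∏ i ∈ range 0, ((k:ℝ) - i))) + (300*(n:ℝ)^4*p^4 + (-300)*(n:ℝ)^3*p^3 + 200*(n:ℝ)^2*p^2 + (-75)*(n:ℝ)*p + 12) * (∑ k ∈ range (n+1), (n.choose k : ℝ) * p^k * q^(n-k) * (∏ i ∈ range 1, ((k:ℝ) - i))) + ((-300)*(n:ℝ)^3*p^3 + 600*(n:ℝ)^2*p^2 + (-525)*(n:ℝ)*p + 180) * (∑ k ∈ range (n+1), (n.choose k : ℝ) * p^k * q^(n-k)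 * (∏ i ∈ range 2, ((k:ℝ) - i))) + (200*(n:ℝ)^2*p^2 + (-450)*(n:ℝ)*p + 300) * (∑ k ∈ range (n+1), (n.choose k : ℝ) * p^k * q^(n-k) * (∏ i ∈ range 3, ((k:ℝ) - i))) + ((-75)*(n:ℝ)*p + 120) * (∑ k ∈ range (n+1), (n.choose k : ℝ) * p^k * q^(n-k) * (∏ i ∈ range 4, ((k:ℝ) - i))) + (12) * (∑ k ∈ range (n+1), (n.choose k : ℝ) * p^k * q^(n-k) * (∏ i ∈ range 5, ((k:ℝ) - i))) := by
        simp only [Finset.sum_add_distrib, ← Finset.mul_sum]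
    _ = ((-137)*(n:ℝ)^5*p^5) * ((∏ i ∈ range 0, ((n:ℝ) - i)) * p^0) + (300*(n:ℝ)^4*p^4 + (-300)*(n:ℝ)^3*p^3 + 200*(n:ℝ)^2*p^2 + (-75)*(n:ℝ)*p + 12) * ((∏ i ∈ range 1, ((n:ℝ) - i)) * p^1) + ((-300)*(n:ℝ)^3*p^3 + 600*(n:ℝ)^2*p^2 + (-525)*(n:ℝ)*p + 180) * ((∏ i ∈ range 2, ((n:ℝ) - i)) * p^2) + (200*(n:ℝ)^2*p^2 + (-450)*(n:ℝ)*p + 300) * ((∏ i ∈ range 3, ((n:ℝ) - i)) * p^3) + ((-75)*(n:ℝ)*p + 120) * ((∏ i ∈ range 4, ((n:ℝ) - i)) * p^4) + (12) * ((∏ i ∈ range 5, ((n:ℝ) - i)) * p^5) := by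
        rw [sumF p q h n 0, sumF p q h n 1, sumF p q h n 2, sumF p q h n 3, sumF p q h n 4, sumF p q h n 5]
    _ = 30*(n:ℝ)^4*p^5 + (-30)*(n:ℝ)^4*p^4 + (-5)*(n:ℝ)^3*p^5 + 30*(n:ℝ)^3*p^4 + (-25)*(n:ℝ)^3*p^3 + (-150)*(n:ℝ)^2*p^5 + 420*(n:ℝ)^2*p^4 + (-375)*(n:ℝ)^2*p^3 + 105*(n:ℝ)^2*p^2 + 288*(n:ℝ)*p^5 + (-720)*(n:ℝ)*p^4 + 600*(n:ℝ)*p^3 + (-180)*(n:ℝ)*p^2 + 12*(n:ℝ)*p := by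
        simp only [Finset.prod_range_succ, Finset.prod_range_zero, one_mul]
        push_cast
        ring

lemma sum_c6 (p q : ℝ) (h : p + q = 1) (n : ℕ) :
    ∑ k ∈ range (n+1), (n.choose k : ℝ) * p^k * q^(n-k) * (((k:ℝ) - p*(n:ℝ))^6) = (-15)*(n:ℝ)^3*p^6 + 45*(n:ℝ)^3*p^5 + (-45)*(n:ℝ)^3*p^4 + 15*(n:ℝ)^3*p^3 + 130*(n:ℝ)^2*p^6 + (-390)*(n:ℝ)^2*p^5 + 415*(n:ℝ)^2*p^4 + (-180)*(n:ℝ)^2*p^3 + 25*(n:ℝ)^2*p^2 + (-120)*(n:ℝ)*p^6 + 360*(n:ℝ)*p^5 + (-390)*(n:ℝ)*p^4 + 180*(n:ℝ)*p^3 + (-31)*(n:ℝ)*p^2 + 1*(n:ℝ)*p := by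
  calc ∑ k ∈ range (n+1), (n.choose k : ℝ) * p^k * q^(n-k) * (((k:ℝ) - p*(n:ℝ))^6)
      = ∑ k ∈ range (n+1), ((1*(n:ℝ)^6*p^6) * ((n.choose k : ℝ) * p^k * q^(n-k) * (∏ i ∈ range 0, ((k:ℝ) - i))) + ((-6)*(n:ℝ)^5*p^5 + 15*(n:ℝ)^4*p^4 + (-20)*(n:ℝ)^3*p^3 + 15*(n:ℝ)^2*p^2 + (-6)*(n:ℝ)*p + 1) * ((n.choose k : ℝ) * p^k * q^(n-k) * (∏ i ∈ range 1, ((k:ℝ) - i))) + (15*(n:ℝ)^4*p^4 + (-60)*(n:ℝ)^3*p^3 + 105*(n:ℝ)^2*p^2 + (-90)*(n:ℝ)*p + 31) * ((n.choose k : ℝ) * p^k * q^(n-k) * (∏ i ∈ range 2, ((k:ℝ) - i))) + ((-20)*(n:ℝ)^3*p^3 + 90*(n:ℝ)^2*p^2 + (-150)*(n:ℝ)*p + 90) * ((n.choose k : ℝ) * p^k * q^(n-k) * (∏ i ∈ range 3, ((k:ℝ) - i))) + (15*(n:ℝ)^2*p^2 + (-60)*(n:ℝ)*p + 65) * ((n.choose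 k : ℝ) * p^k * q^(n-k) * (∏ i ∈ range 4, ((k:ℝ) - i))) + ((-6)*(n:ℝ)*p + 15) * ((n.choose k : ℝ) * p^k * q^(n-k) * (∏ i ∈ range 5, ((k:ℝ) - i))) + (1) * ((n.choose k : ℝ) * p^k * q^(n-k) * (∏ i ∈ range 6, ((k:ℝ) - i)))) := by
        refine Finset.sum_congr rfl (fun k _ => ?_)
        simp only [Finset.prod_range_succ, Finset.prod_range_zero, one_mul]
        push_cast
        ring
    _ = (1*(n:ℝ)^6*p^6) * (∑ k ∈ range (n+1), (n.choose k : ℝ) * p^k * q^(n-k) * (∏ i ∈ range 0, ((k:ℝ) - i))) + ((-6)*(n:ℝ)^5*p^5 + 15*(n:ℝ)^4*p^4 + (-20)*(n:ℝ)^3*p^3 + 15*(n:ℝ)^2*p^2 + (-6)*(n:ℝ)*p + 1) * (∑ k ∈ range (n+1), (n.choose k : ℝ) * p^k * q^(n-k) * (∏ i ∈ range 1, ((k:ℝ) - i))) + (15*(n:ℝ)^4*p^4 + (-60)*(n:ℝ)^3*p^3 + 105*(n:ℝ)^2*p^2 + (-90)*(n:ℝ)*p + 31) * (∑ k ∈ range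 (n+1), (n.choose k : ℝ) * p^k * q^(n-k) * (∏ i ∈ range 2, ((k:ℝ) - i))) + ((-20)*(n:ℝ)^3*p^3 + 90*(n:ℝ)^2*p^2 + (-150)*(n:ℝ)*p + 90) * (∑ k ∈ range (n+1), (n.choose k : ℝ) * p^k * q^(n-k) * (∏ i ∈ range 3, ((k:ℝ) - i))) + (15*(n:ℝ)^2*p^2 + (-60)*(n:ℝ)*p + 65) * (∑ k ∈ range (n+1), (n.choose k : ℝ) * p^k * q^(n-k) * (∏ i ∈ range 4, ((k:ℝ) - i))) + ((-6)*(n:ℝ)*p + 15) * (∑ k ∈ range (n+1), (n.choose k : ℝ) * p^k * q^(n-k) * (∏ i ∈ range 5, ((k:ℝ) - i))) + (1) * (∑ k ∈ range (n+1), (n.choose k : ℝ) * p^k * q^(n-k) * (∏ i ∈ range 6, ((k:ℝ) - i))) := by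
        simp only [Finset.sum_add_distrib, ← Finset.mul_sum]
    _ = (1*(n:ℝ)^6*p^6) * ((∏ i ∈ range 0, ((n:ℝ) - i)) * p^0) + ((-6)*(n:ℝ)^5*p^5 + 15*(n:ℝ)^4*p^4 + (-20)*(n:ℝ)^3*p^3 + 15*(n:ℝ)^2*p^2 + (-6)*(n:ℝ)*p + 1) * ((∏ i ∈ range 1, ((n:ℝ) - i)) * p^1) + (15*(n:ℝ)^4*p^4 + (-60)*(n:ℝ)^3*p^3 + 105*(n:ℝ)^2*p^2 + (-90)*(n:ℝ)*p + 31) * ((∏ i ∈ range 2, ((n:ℝ) - i)) * p^2) + ((-20)*(n:ℝ)^3*p^3 + 90*(n:ℝ)^2*p^2 + (-150)*(n:ℝ)*p + 90) * ((∏ i ∈ range 3, ((n:ℝ) - i)) * p^3) + (15*(n:ℝ)^2*p^2 + (-60)*(n:ℝ)*p + 65) * ((∏ i ∈ range 4, ((n:ℝ) - i)) * p^4) + ((-6)*(n:ℝ)*p + 15) * ((∏ i ∈ range 5, ((n:ℝ) - i)) * p^5) + (1) * ((∏ i ∈ range 6, ((n:ℝ) - i)) * p^6) := by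
        rw [sumF p q h n 0, sumF p q h n 1, sumF p q h n 2, sumF p q h n 3, sumF p q h n 4, sumF p q h n 5, sumF p q h n 6]
    _ = (-15)*(n:ℝ)^3*p^6 + 45*(n:ℝ)^3*p^5 + (-45)*(n:ℝ)^3*p^4 + 15*(n:ℝ)^3*p^3 + 130*(n:ℝ)^2*p^6 + (-390)*(n:ℝ)^2*p^5 + 415*(n:ℝ)^2*p^4 + (-180)*(n:ℝ)^2*p^3 + 25*(n:ℝ)^2*p^2 + (-120)*(n:ℝ)*p^6 + 360*(n:ℝ)*p^5 + (-390)*(n:ℝ)*p^4 + 180*(n:ℝ)*p^3 + (-31)*(n:ℝ)*p^2 + 1*(n:ℝ)*p := by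
        simp only [Finset.prod_range_succ, Finset.prod_range_zero, one_mul]
        push_cast
        ring

lemma sum_c8 (p q : ℝ) (h : p + q = 1) (n : ℕ) :
    ∑ k ∈ range (n+1), (n.choose k : ℝ) * p^k * q^(n-k) * (((k:ℝ) - p*(n:ℝ))^8) = 105*(n:ℝ)^4*p^8 + (-420)*(n:ℝ)^4*p^7 + 630*(n:ℝ)^4*p^6 + (-420)*(n:ℝ)^4*p^5 + 105*(n:ℝ)^4*p^4 + (-2380)*(n:ℝ)^3*p^8 + 9520*(n:ℝ)^3*p^7 + (-14770)*(n:ℝ)^3*p^6 + 10990*(n:ℝ)^3*p^5 + (-3850)*(n:ℝ)^3*p^4 + 490*(n:ℝ)^3*p^3 + 7308*(n:ℝ)^2*p^8 + (-29232)*(n:ℝ)^2*p^7 + 46004*(n:ℝ)^2*p^6 + (-35700)*(n:ℝ)^2*p^5 + 13895*(n:ℝ)^2*p^4 + (-2394)*(n:ℝ)^2*p^3 + 119*(n:ℝ)^2*p^2 + (-5040)*(n:ℝ)*p^8 + 20160*(n:ℝ)*p^7 + (-31920)*(n:ℝ)*p^6 + 25200*(n:ℝ)*p^5 + (-10206)*(n:ℝ)*p^4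 + 1932*(n:ℝ)*p^3 + (-127)*(n:ℝ)*p^2 + 1*(n:ℝ)*p := by
  calc ∑ k ∈ range (n+1), (n.choose k : ℝ) * p^k * q^(n-k) * (((k:ℝ) - p*(n:ℝ))^8)
      = ∑ k ∈ range (n+1), ((1*(n:ℝ)^8*p^8) * ((n.choose k : ℝ) * p^k * q^(n-k) * (∏ i ∈ range 0, ((k:ℝ) - i))) + ((-8)*(n:ℝ)^7*p^7 + 28*(n:ℝ)^6*p^6 + (-56)*(n:ℝ)^5*p^5 + 70*(n:ℝ)^4*p^4 + (-56)*(n:ℝ)^3*p^3 + 28*(n:ℝ)^2*p^2 + (-8)*(n:ℝ)*p + 1) * ((n.choose k : ℝ) * p^k * q^(n-k) * (∏ i ∈ range 1, ((k:ℝ) - i))) + (28*(n:ℝ)^6*p^6 + (-168)*(n:ℝ)^5*p^5 + 490*(n:ℝ)^4*p^4 + (-840)*(n:ℝ)^3*p^3 + 868*(n:ℝ)^2*p^2 + (-504)*(n:ℝ)*p + 127) * ((n.choose k : ℝ) * p^k * q^(n-k) * (∏ i ∈ range 2, ((k:ℝ) - i))) + ((-56)*(n:ℝ)^5*p^5 +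 420*(n:ℝ)^4*p^4 + (-1400)*(n:ℝ)^3*p^3 + 2520*(n:ℝ)^2*p^2 + (-2408)*(n:ℝ)*p + 966) * ((n.choose k : ℝ) * p^k * q^(n-k) * (∏ i ∈ range 3, ((k:ℝ) - i))) + (70*(n:ℝ)^4*p^4 + (-560)*(n:ℝ)^3*p^3 + 1820*(n:ℝ)^2*p^2 + (-2800)*(n:ℝ)*p + 1701) * ((n.choose k : ℝ) * p^k * q^(n-k) * (∏ i ∈ range 4, ((k:ℝ) - i))) + ((-56)*(n:ℝ)^3*p^3 + 420*(n:ℝ)^2*p^2 + (-1120)*(n:ℝ)*p + 1050) * ((n.choose k : ℝ) * p^k * q^(n-k) * (∏ i ∈ range 5, ((k:ℝ) - i))) + (28*(n:ℝ)^2*p^2 + (-168)*(n:ℝ)*p + 266) * ((n.choose k : ℝ) * p^k * q^(n-k) * (∏ i ∈ range 6, ((k:ℝ) - i))) + ((-8)*(n:ℝ)*p + 28) * ((n.choose k : ℝ) * p^k * q^(n-k) * (∏ i ∈ range 7, ((k:ℝ) - i))) + (1) * ((n.choose k : ℝ) * p^k * q^(n-k) * (∏ i ∈ range 8, ((k:ℝ)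 - i)))) := by
        refine Finset.sum_congr rfl (fun k _ => ?_)
        simp only [Finset.prod_range_succ, Finset.prod_range_zero, one_mul]
        push_cast
        ring
    _ = (1*(n:ℝ)^8*p^8) * (∑ k ∈ range (n+1), (n.choose k : ℝ) * p^k * q^(n-k) * (∏ i ∈ range 0, ((k:ℝ) - i))) + ((-8)*(n:ℝ)^7*p^7 + 28*(n:ℝ)^6*p^6 + (-56)*(n:ℝ)^5*p^5 + 70*(n:ℝ)^4*p^4 + (-56)*(n:ℝ)^3*p^3 + 28*(n:ℝ)^2*p^2 + (-8)*(n:ℝ)*p + 1) * (∑ k ∈ range (n+1), (n.choose k : ℝ) * p^k * q^(n-k) * (∏ i ∈ range 1, ((k:ℝ) - i))) + (28*(n:ℝ)^6*p^6 + (-168)*(n:ℝ)^5*p^5 + 490*(n:ℝ)^4*p^4 + (-840)*(n:ℝ)^3*p^3 + 868*(n:ℝ)^2*p^2 + (-504)*(n:ℝ)*p + 127) * (∑ k ∈ range (n+1), (n.choose k : ℝ) * p^k * q^(n-k) * (∏ i ∈ range 2, ((k:ℝ) - i))) + ((-56)*(n:ℝ)^5*p^5 + 420*(n:ℝ)^4*p^4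 + (-1400)*(n:ℝ)^3*p^3 + 2520*(n:ℝ)^2*p^2 + (-2408)*(n:ℝ)*p + 966) * (∑ k ∈ range (n+1), (n.choose k : ℝ) * p^k * q^(n-k) * (∏ i ∈ range 3, ((k:ℝ) - i))) + (70*(n:ℝ)^4*p^4 + (-560)*(n:ℝ)^3*p^3 + 1820*(n:ℝ)^2*p^2 + (-2800)*(n:ℝ)*p + 1701) * (∑ k ∈ range (n+1), (n.choose k : ℝ) * p^k * q^(n-k) * (∏ i ∈ range 4, ((k:ℝ) - i))) + ((-56)*(n:ℝ)^3*p^3 + 420*(n:ℝ)^2*p^2 + (-1120)*(n:ℝ)*p + 1050) * (∑ k ∈ range (n+1), (n.choose k : ℝ) * p^k * q^(n-k) * (∏ i ∈ range 5, ((k:ℝ) - i))) + (28*(n:ℝ)^2*p^2 + (-168)*(n:ℝ)*p + 266) * (∑ k ∈ range (n+1), (n.choose k : ℝ) * p^k * q^(n-k) * (∏ i ∈ range 6, ((k:ℝ) - i))) + ((-8)*(n:ℝ)*p + 28) * (∑ k ∈ range (n+1), (n.choose k : ℝ) * p^k * q^(n-k) * (∏ i ∈ range 7, ((k:ℝ)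 - i))) + (1) * (∑ k ∈ range (n+1), (n.choose k : ℝ) * p^k * q^(n-k) * (∏ i ∈ range 8, ((k:ℝ) - i))) := by
        simp only [Finset.sum_add_distrib, ← Finset.mul_sum]
    _ = (1*(n:ℝ)^8*p^8) * ((∏ i ∈ range 0, ((n:ℝ) - i)) * p^0) + ((-8)*(n:ℝ)^7*p^7 + 28*(n:ℝ)^6*p^6 + (-56)*(n:ℝ)^5*p^5 + 70*(n:ℝ)^4*p^4 + (-56)*(n:ℝ)^3*p^3 + 28*(n:ℝ)^2*p^2 + (-8)*(n:ℝ)*p + 1) * ((∏ i ∈ range 1, ((n:ℝ) - i)) * p^1) + (28*(n:ℝ)^6*p^6 + (-168)*(n:ℝ)^5*p^5 + 490*(n:ℝ)^4*p^4 + (-840)*(n:ℝ)^3*p^3 + 868*(n:ℝ)^2*p^2 + (-504)*(n:ℝ)*p + 127) * ((∏ i ∈ range 2, ((n:ℝ) - i)) * p^2) + ((-56)*(n:ℝ)^5*p^5 + 420*(n:ℝ)^4*p^4 + (-1400)*(n:ℝ)^3*p^3 + 2520*(n:ℝ)^2*p^2 + (-2408)*(n:ℝ)*p + 966) * ((∏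 i ∈ range 3, ((n:ℝ) - i)) * p^3) + (70*(n:ℝ)^4*p^4 + (-560)*(n:ℝ)^3*p^3 + 1820*(n:ℝ)^2*p^2 + (-2800)*(n:ℝ)*p + 1701) * ((∏ i ∈ range 4, ((n:ℝ) - i)) * p^4) + ((-56)*(n:ℝ)^3*p^3 + 420*(n:ℝ)^2*p^2 + (-1120)*(n:ℝ)*p + 1050) * ((∏ i ∈ range 5, ((n:ℝ) - i)) * p^5) + (28*(n:ℝ)^2*p^2 + (-168)*(n:ℝ)*p + 266) * ((∏ i ∈ range 6, ((n:ℝ) - i)) * p^6) + ((-8)*(n:ℝ)*p + 28) * ((∏ i ∈ range 7, ((n:ℝ) - i)) * p^7) + (1) * ((∏ i ∈ range 8, ((n:ℝ) - i)) * p^8) := by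
        rw [sumF p q h n 0, sumF p q h n 1, sumF p q h n 2, sumF p q h n 3, sumF p q h n 4, sumF p q h n 5, sumF p q h n 6, sumF p q h n 7, sumF p q h n 8]
    _ = 105*(n:ℝ)^4*p^8 + (-420)*(n:ℝ)^4*p^7 + 630*(n:ℝ)^4*p^6 + (-420)*(n:ℝ)^4*p^5 + 105*(n:ℝ)^4*p^4 + (-2380)*(n:ℝ)^3*p^8 + 9520*(n:ℝ)^3*p^7 + (-14770)*(n:ℝ)^3*p^6 + 10990*(n:ℝ)^3*p^5 + (-3850)*(n:ℝ)^3*p^4 + 490*(n:ℝ)^3*p^3 + 7308*(n:ℝ)^2*p^8 + (-29232)*(n:ℝ)^2*p^7 + 46004*(n:ℝ)^2*p^6 + (-35700)*(n:ℝ)^2*p^5 + 13895*(n:ℝ)^2*p^4 + (-2394)*(n:ℝ)^2*p^3 + 119*(n:ℝ)^2*p^2 + (-5040)*(n:ℝ)*p^8 + 20160*(n:ℝ)*p^7 + (-31920)*(n:ℝ)*p^6 + 25200*(n:ℝ)*p^5 + (-10206)*(n:ℝ)*p^4 + 1932*(n:ℝ)*p^3 + (-127)*(n:ℝ)*p^2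 + 1*(n:ℝ)*p := by
        simp only [Finset.prod_range_succ, Finset.prod_range_zero, one_mul]
        push_cast
        ring

lemma mono_bound (θ ν : ℝ) (h0 : 0 ≤ θ) (h1 : θ ≤ 1) (hν : 1 ≤ ν) (t d s : ℕ) (htd : t ≤ d) :
    ν^t*θ^s ≤ ν^d := by
  have h2 : θ^s ≤ 1 := pow_le_one₀ h0 h1
  have h3 : ν^t ≤ ν^d := pow_le_pow_right₀ hν htd
  have h4 : (0:ℝ) ≤ ν^t := by positivity
  nlinarith

lemma num_bound (θ ν : ℝ) (hθ0 : 0 < θ) (hθ1 : θ < 1) (hν : 1 ≤ ν) :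
    |(-150)*ν^2*θ^5 + 420*ν^2*θ^4 + (-375)*ν^2*θ^3 + 105*ν^2*θ^2 + 288*ν*θ^5 + (-720)*ν*θ^4 + 600*ν*θ^3 + (-180)*ν*θ^2 + 12*ν*θ| ≤ 2850*ν^2 := by
  have h_1_1 : 0 ≤ ν^1*θ^1 ∧ ν^1*θ^1 ≤ ν^2 :=
    ⟨by positivity, mono_bound θ ν (le_of_lt hθ0) (le_of_lt hθ1) hν 1 2 1 (by norm_num)⟩
  have h_1_2 : 0 ≤ ν^1*θ^2 ∧ ν^1*θ^2 ≤ ν^2 :=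
    ⟨by positivity, mono_bound θ ν (le_of_lt hθ0) (le_of_lt hθ1) hν 1 2 2 (by norm_num)⟩
  have h_1_3 : 0 ≤ ν^1*θ^3 ∧ ν^1*θ^3 ≤ ν^2 :=
    ⟨by positivity, mono_bound θ ν (le_of_lt hθ0) (le_of_lt hθ1) hν 1 2 3 (by norm_num)⟩
  have h_1_4 : 0 ≤ ν^1*θ^4 ∧ ν^1*θ^4 ≤ ν^2 :=
    ⟨by positivity, mono_bound θ ν (le_of_lt hθ0) (le_of_lt hθ1) hν 1 2 4 (by norm_num)⟩
  have h_1_5 : 0 ≤ ν^1*θ^5 ∧ ν^1*θ^5 ≤ ν^2 :=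
    ⟨by positivity, mono_bound θ ν (le_of_lt hθ0) (le_of_lt hθ1) hν 1 2 5 (by norm_num)⟩
  have h_2_2 : 0 ≤ ν^2*θ^2 ∧ ν^2*θ^2 ≤ ν^2 :=
    ⟨by positivity, mono_bound θ ν (le_of_lt hθ0) (le_of_lt hθ1) hν 2 2 2 (by norm_num)⟩
  have h_2_3 : 0 ≤ ν^2*θ^3 ∧ ν^2*θ^3 ≤ ν^2 :=
    ⟨by positivity, mono_bound θ ν (le_of_lt hθ0) (le_of_lt hθ1) hν 2 2 3 (by norm_num)⟩
  have h_2_4 : 0 ≤ ν^2*θ^4 ∧ ν^2*θ^4 ≤ ν^2 :=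
    ⟨by positivity, mono_bound θ ν (le_of_lt hθ0) (le_of_lt hθ1) hν 2 2 4 (by norm_num)⟩
  have h_2_5 : 0 ≤ ν^2*θ^5 ∧ ν^2*θ^5 ≤ ν^2 :=
    ⟨by positivity, mono_bound θ ν (le_of_lt hθ0) (le_of_lt hθ1) hν 2 2 5 (by norm_num)⟩
  rw [abs_le]
  constructor
  · linarith [h_1_1.1, h_1_1.2, h_1_2.1, h_1_2.2, h_1_3.1, h_1_3.2, h_1_4.1, h_1_4.2, h_1_5.1, h_1_5.2, h_2_2.1, h_2_2.2, h_2_3.1, h_2_3.2, h_2_4.1, h_2_4.2, h_2_5.1, h_2_5.2]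
  · linarith [h_1_1.1, h_1_1.2, h_1_2.1, h_1_2.2, h_1_3.1, h_1_3.2, h_1_4.1, h_1_4.2, h_1_5.1, h_1_5.2, h_2_2.1, h_2_2.2, h_2_3.1, h_2_3.2, h_2_4.1, h_2_4.2, h_2_5.1, h_2_5.2]

lemma m6_bound (θ ν : ℝ) (hθ0 : 0 < θ) (hθ1 : θ < 1) (hν : 1 ≤ ν) :
    |(-15)*ν^3*θ^6 + 45*ν^3*θ^5 + (-45)*ν^3*θ^4 + 15*ν^3*θ^3 + 130*ν^2*θ^6 + (-390)*ν^2*θ^5 + 415*ν^2*θ^4 + (-180)*ν^2*θ^3 + 25*ν^2*θ^2 + (-120)*ν*θ^6 + 360*ν*θ^5 + (-390)*ν*θ^4 + 180*ν*θ^3 + (-31)*ν*θ^2 + 1*ν*θ| ≤ 2342*ν^3 := by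
  have h_1_1 : 0 ≤ ν^1*θ^1 ∧ ν^1*θ^1 ≤ ν^3 :=
    ⟨by positivity, mono_bound θ ν (le_of_lt hθ0) (le_of_lt hθ1) hν 1 3 1 (by norm_num)⟩
  have h_1_2 : 0 ≤ ν^1*θ^2 ∧ ν^1*θ^2 ≤ ν^3 :=
    ⟨by positivity, mono_bound θ ν (le_of_lt hθ0) (le_of_lt hθ1) hν 1 3 2 (by norm_num)⟩
  have h_1_3 : 0 ≤ ν^1*θ^3 ∧ ν^1*θ^3 ≤ ν^3 :=
    ⟨by positivity, mono_bound θ ν (le_of_lt hθ0) (le_of_lt hθ1) hν 1 3 3 (by norm_num)⟩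
  have h_1_4 : 0 ≤ ν^1*θ^4 ∧ ν^1*θ^4 ≤ ν^3 :=
    ⟨by positivity, mono_bound θ ν (le_of_lt hθ0) (le_of_lt hθ1) hν 1 3 4 (by norm_num)⟩
  have h_1_5 : 0 ≤ ν^1*θ^5 ∧ ν^1*θ^5 ≤ ν^3 :=
    ⟨by positivity, mono_bound θ ν (le_of_lt hθ0) (le_of_lt hθ1) hν 1 3 5 (by norm_num)⟩
  have h_1_6 : 0 ≤ ν^1*θ^6 ∧ ν^1*θ^6 ≤ ν^3 :=
    ⟨by positivity, mono_bound θ ν (le_of_lt hθ0) (le_of_lt hθ1) hν 1 3 6 (by norm_num)⟩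
  have h_2_2 : 0 ≤ ν^2*θ^2 ∧ ν^2*θ^2 ≤ ν^3 :=
    ⟨by positivity, mono_bound θ ν (le_of_lt hθ0) (le_of_lt hθ1) hν 2 3 2 (by norm_num)⟩
  have h_2_3 : 0 ≤ ν^2*θ^3 ∧ ν^2*θ^3 ≤ ν^3 :=
    ⟨by positivity, mono_bound θ ν (le_of_lt hθ0) (le_of_lt hθ1) hν 2 3 3 (by norm_num)⟩
  have h_2_4 : 0 ≤ ν^2*θ^4 ∧ ν^2*θ^4 ≤ ν^3 :=
    ⟨by positivity, mono_bound θ ν (le_of_lt hθ0) (le_of_lt hθ1) hν 2 3 4 (by norm_num)⟩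
  have h_2_5 : 0 ≤ ν^2*θ^5 ∧ ν^2*θ^5 ≤ ν^3 :=
    ⟨by positivity, mono_bound θ ν (le_of_lt hθ0) (le_of_lt hθ1) hν 2 3 5 (by norm_num)⟩
  have h_2_6 : 0 ≤ ν^2*θ^6 ∧ ν^2*θ^6 ≤ ν^3 :=
    ⟨by positivity, mono_bound θ ν (le_of_lt hθ0) (le_of_lt hθ1) hν 2 3 6 (by norm_num)⟩
  have h_3_3 : 0 ≤ ν^3*θ^3 ∧ ν^3*θ^3 ≤ ν^3 :=
    ⟨by positivity, mono_bound θ ν (le_of_lt hθ0) (le_of_lt hθ1) hν 3 3 3 (by norm_num)⟩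
  have h_3_4 : 0 ≤ ν^3*θ^4 ∧ ν^3*θ^4 ≤ ν^3 :=
    ⟨by positivity, mono_bound θ ν (le_of_lt hθ0) (le_of_lt hθ1) hν 3 3 4 (by norm_num)⟩
  have h_3_5 : 0 ≤ ν^3*θ^5 ∧ ν^3*θ^5 ≤ ν^3 :=
    ⟨by positivity, mono_bound θ ν (le_of_lt hθ0) (le_of_lt hθ1) hν 3 3 5 (by norm_num)⟩
  have h_3_6 : 0 ≤ ν^3*θ^6 ∧ ν^3*θ^6 ≤ ν^3 :=
    ⟨by positivity, mono_bound θ ν (le_of_lt hθ0) (le_of_lt hθ1) hν 3 3 6 (by norm_num)⟩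
  rw [abs_le]
  constructor
  · linarith [h_1_1.1, h_1_1.2, h_1_2.1, h_1_2.2, h_1_3.1, h_1_3.2, h_1_4.1, h_1_4.2, h_1_5.1, h_1_5.2, h_1_6.1, h_1_6.2, h_2_2.1, h_2_2.2, h_2_3.1, h_2_3.2, h_2_4.1, h_2_4.2, h_2_5.1, h_2_5.2, h_2_6.1, h_2_6.2, h_3_3.1, h_3_3.2, h_3_4.1, h_3_4.2, h_3_5.1, h_3_5.2, h_3_6.1, h_3_6.2]
  · linarith [h_1_1.1, h_1_1.2, h_1_2.1, h_1_2.2, h_1_3.1, h_1_3.2, h_1_4.1, h_1_4.2, h_1_5.1, h_1_5.2, h_1_6.1, h_1_6.2, h_2_2.1, h_2_2.2, h_2_3.1, h_2_3.2, h_2_4.1, h_2_4.2, h_2_5.1, h_2_5.2, h_2_6.1, h_2_6.2, h_3_3.1, h_3_3.2, h_3_4.1, h_3_4.2, h_3_5.1, h_3_5.2, h_3_6.1, h_3_6.2]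

lemma m8_bound (θ ν : ℝ) (hθ0 : 0 < θ) (hθ1 : θ < 1) (hν : 1 ≤ ν) :
    |105*ν^4*θ^8 + (-420)*ν^4*θ^7 + 630*ν^4*θ^6 + (-420)*ν^4*θ^5 + 105*ν^4*θ^4 + (-2380)*ν^3*θ^8 + 9520*ν^3*θ^7 + (-14770)*ν^3*θ^6 + 10990*ν^3*θ^5 + (-3850)*ν^3*θ^4 + 490*ν^3*θ^3 + 7308*ν^2*θ^8 + (-29232)*ν^2*θ^7 + 46004*ν^2*θ^6 + (-35700)*ν^2*θ^5 + 13895*ν^2*θ^4 + (-2394)*ν^2*θ^3 + 119*ν^2*θ^2 + (-5040)*ν*θ^8 + 20160*ν*θ^7 + (-31920)*ν*θ^6 + 25200*ν*θ^5 + (-10206)*ν*θ^4 + 1932*ν*θ^3 + (-127)*ν*θ^2 + 1*ν*θ| ≤ 272918*ν^4 := by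
  have h_1_1 : 0 ≤ ν^1*θ^1 ∧ ν^1*θ^1 ≤ ν^4 :=
    ⟨by positivity, mono_bound θ ν (le_of_lt hθ0) (le_of_lt hθ1) hν 1 4 1 (by norm_num)⟩
  have h_1_2 : 0 ≤ ν^1*θ^2 ∧ ν^1*θ^2 ≤ ν^4 :=
    ⟨by positivity, mono_bound θ ν (le_of_lt hθ0) (le_of_lt hθ1) hν 1 4 2 (by norm_num)⟩
  have h_1_3 : 0 ≤ ν^1*θ^3 ∧ ν^1*θ^3 ≤ ν^4 :=
    ⟨by positivity, mono_bound θ ν (le_of_lt hθ0) (le_of_lt hθ1) hν 1 4 3 (by norm_num)⟩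
  have h_1_4 : 0 ≤ ν^1*θ^4 ∧ ν^1*θ^4 ≤ ν^4 :=
    ⟨by positivity, mono_bound θ ν (le_of_lt hθ0) (le_of_lt hθ1) hν 1 4 4 (by norm_num)⟩
  have h_1_5 : 0 ≤ ν^1*θ^5 ∧ ν^1*θ^5 ≤ ν^4 :=
    ⟨by positivity, mono_bound θ ν (le_of_lt hθ0) (le_of_lt hθ1) hν 1 4 5 (by norm_num)⟩
  have h_1_6 : 0 ≤ ν^1*θ^6 ∧ ν^1*θ^6 ≤ ν^4 :=
    ⟨by positivity, mono_bound θ ν (le_of_lt hθ0) (le_of_lt hθ1) hν 1 4 6 (by norm_num)⟩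
  have h_1_7 : 0 ≤ ν^1*θ^7 ∧ ν^1*θ^7 ≤ ν^4 :=
    ⟨by positivity, mono_bound θ ν (le_of_lt hθ0) (le_of_lt hθ1) hν 1 4 7 (by norm_num)⟩
  have h_1_8 : 0 ≤ ν^1*θ^8 ∧ ν^1*θ^8 ≤ ν^4 :=
    ⟨by positivity, mono_bound θ ν (le_of_lt hθ0) (le_of_lt hθ1) hν 1 4 8 (by norm_num)⟩
  have h_2_2 : 0 ≤ ν^2*θ^2 ∧ ν^2*θ^2 ≤ ν^4 :=
    ⟨by positivity, mono_bound θ ν (le_of_lt hθ0) (le_of_lt hθ1) hν 2 4 2 (by norm_num)⟩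
  have h_2_3 : 0 ≤ ν^2*θ^3 ∧ ν^2*θ^3 ≤ ν^4 :=
    ⟨by positivity, mono_bound θ ν (le_of_lt hθ0) (le_of_lt hθ1) hν 2 4 3 (by norm_num)⟩
  have h_2_4 : 0 ≤ ν^2*θ^4 ∧ ν^2*θ^4 ≤ ν^4 :=
    ⟨by positivity, mono_bound θ ν (le_of_lt hθ0) (le_of_lt hθ1) hν 2 4 4 (by norm_num)⟩
  have h_2_5 : 0 ≤ ν^2*θ^5 ∧ ν^2*θ^5 ≤ ν^4 :=
    ⟨by positivity, mono_bound θ ν (le_of_lt hθ0) (le_of_lt hθ1) hν 2 4 5 (by norm_num)⟩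
  have h_2_6 : 0 ≤ ν^2*θ^6 ∧ ν^2*θ^6 ≤ ν^4 :=
    ⟨by positivity, mono_bound θ ν (le_of_lt hθ0) (le_of_lt hθ1) hν 2 4 6 (by norm_num)⟩
  have h_2_7 : 0 ≤ ν^2*θ^7 ∧ ν^2*θ^7 ≤ ν^4 :=
    ⟨by positivity, mono_bound θ ν (le_of_lt hθ0) (le_of_lt hθ1) hν 2 4 7 (by norm_num)⟩
  have h_2_8 : 0 ≤ ν^2*θ^8 ∧ ν^2*θ^8 ≤ ν^4 :=
    ⟨by positivity, mono_bound θ ν (le_of_lt hθ0) (le_of_lt hθ1) hν 2 4 8 (by norm_num)⟩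
  have h_3_3 : 0 ≤ ν^3*θ^3 ∧ ν^3*θ^3 ≤ ν^4 :=
    ⟨by positivity, mono_bound θ ν (le_of_lt hθ0) (le_of_lt hθ1) hν 3 4 3 (by norm_num)⟩
  have h_3_4 : 0 ≤ ν^3*θ^4 ∧ ν^3*θ^4 ≤ ν^4 :=
    ⟨by positivity, mono_bound θ ν (le_of_lt hθ0) (le_of_lt hθ1) hν 3 4 4 (by norm_num)⟩
  have h_3_5 : 0 ≤ ν^3*θ^5 ∧ ν^3*θ^5 ≤ ν^4 :=
    ⟨by positivity, mono_bound θ ν (le_of_lt hθ0) (le_of_lt hθ1) hν 3 4 5 (by norm_num)⟩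
  have h_3_6 : 0 ≤ ν^3*θ^6 ∧ ν^3*θ^6 ≤ ν^4 :=
    ⟨by positivity, mono_bound θ ν (le_of_lt hθ0) (le_of_lt hθ1) hν 3 4 6 (by norm_num)⟩
  have h_3_7 : 0 ≤ ν^3*θ^7 ∧ ν^3*θ^7 ≤ ν^4 :=
    ⟨by positivity, mono_bound θ ν (le_of_lt hθ0) (le_of_lt hθ1) hν 3 4 7 (by norm_num)⟩
  have h_3_8 : 0 ≤ ν^3*θ^8 ∧ ν^3*θ^8 ≤ ν^4 :=
    ⟨by positivity, mono_bound θ ν (le_of_lt hθ0) (le_of_lt hθ1) hν 3 4 8 (by norm_num)⟩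
  have h_4_4 : 0 ≤ ν^4*θ^4 ∧ ν^4*θ^4 ≤ ν^4 :=
    ⟨by positivity, mono_bound θ ν (le_of_lt hθ0) (le_of_lt hθ1) hν 4 4 4 (by norm_num)⟩
  have h_4_5 : 0 ≤ ν^4*θ^5 ∧ ν^4*θ^5 ≤ ν^4 :=
    ⟨by positivity, mono_bound θ ν (le_of_lt hθ0) (le_of_lt hθ1) hν 4 4 5 (by norm_num)⟩
  have h_4_6 : 0 ≤ ν^4*θ^6 ∧ ν^4*θ^6 ≤ ν^4 :=
    ⟨by positivity, mono_bound θ ν (le_of_lt hθ0) (le_of_lt hθ1) hν 4 4 6 (by norm_num)⟩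
  have h_4_7 : 0 ≤ ν^4*θ^7 ∧ ν^4*θ^7 ≤ ν^4 :=
    ⟨by positivity, mono_bound θ ν (le_of_lt hθ0) (le_of_lt hθ1) hν 4 4 7 (by norm_num)⟩
  have h_4_8 : 0 ≤ ν^4*θ^8 ∧ ν^4*θ^8 ≤ ν^4 :=
    ⟨by positivity, mono_bound θ ν (le_of_lt hθ0) (le_of_lt hθ1) hν 4 4 8 (by norm_num)⟩
  rw [abs_le]
  constructor
  · linarith [h_1_1.1, h_1_1.2, h_1_2.1, h_1_2.2, h_1_3.1, h_1_3.2, h_1_4.1, h_1_4.2, h_1_5.1, h_1_5.2, h_1_6.1, h_1_6.2, h_1_7.1, h_1_7.2, h_1_8.1, h_1_8.2, h_2_2.1, h_2_2.2, h_2_3.1, h_2_3.2, h_2_4.1, h_2_4.2, h_2_5.1, h_2_5.2, h_2_6.1, h_2_6.2, h_2_7.1, h_2_7.2, h_2_8.1, h_2_8.2, h_3_3.1, h_3_3.2, h_3_4.1, h_3_4.2, h_3_5.1, h_3_5.2, h_3_6.1, h_3_6.2, h_3_7.1, h_3_7.2, h_3_8.1, h_3_8.2, h_4_4.1, h_4_4.2,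 h_4_5.1, h_4_5.2, h_4_6.1, h_4_6.2, h_4_7.1, h_4_7.2, h_4_8.1, h_4_8.2]
  · linarith [h_1_1.1, h_1_1.2, h_1_2.1, h_1_2.2, h_1_3.1, h_1_3.2, h_1_4.1, h_1_4.2, h_1_5.1, h_1_5.2, h_1_6.1, h_1_6.2, h_1_7.1, h_1_7.2, h_1_8.1, h_1_8.2, h_2_2.1, h_2_2.2, h_2_3.1, h_2_3.2, h_2_4.1, h_2_4.2, h_2_5.1, h_2_5.2, h_2_6.1, h_2_6.2, h_2_7.1, h_2_7.2, h_2_8.1, h_2_8.2, h_3_3.1, h_3_3.2, h_3_4.1, h_3_4.2, h_3_5.1, h_3_5.2, h_3_6.1, h_3_6.2, h_3_7.1, h_3_7.2, h_3_8.1, h_3_8.2, h_4_4.1, h_4_4.2, h_4_5.1, h_4_5.2, h_4_6.1, h_4_6.2, h_4_7.1, h_4_7.2, h_4_8.1, h_4_8.2]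

noncomputable def gp (θ : ℝ) (n k : ℕ) : ℝ :=
  ((k:ℝ) - θ*n)/(θ*n) - (((k:ℝ) - θ*n)/(θ*n))^2/2 + (((k:ℝ) - θ*n)/(θ*n))^3/3
    - (((k:ℝ) - θ*n)/(θ*n))^4/4 + (((k:ℝ) - θ*n)/(θ*n))^5/5

lemma taylor_log (x : ℝ) (hx : |x| ≤ 1/2) :
    |Real.log (1+x) - (x - x^2/2 + x^3/3 - x^4/4 + x^5/5)| ≤ 2*x^6 := by
  have h1 : |(-x)| < 1 := by rw [abs_neg]; linarith [abs_nonneg x]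
  have h := Real.abs_log_sub_add_sum_range_le h1 5
  simp only [Finset.sum_range_succ, Finset.sum_range_zero] at h
  have e1 : (1 : ℝ) - (-x) = 1 + x := by ring
  rw [e1] at h
  push_cast at h
  have e2 : Real.log (1+x) - (x - x^2/2 + x^3/3 - x^4/4 + x^5/5)
      = 0 + (-x)^(0+1)/(0+1) + (-x)^(1+1)/(1+1) + (-x)^(2+1)/(2+1) + (-x)^(3+1)/(3+1)
        + (-x)^(4+1)/(4+1) + Real.log (1+x) := by push_cast; ring
  rw [e2]
  refine h.trans ?_
  have e3 : |(-x)| ^ (5+1) = x^6 := by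
    rw [abs_neg, ← abs_pow, show 5+1=6 by norm_num]
    exact abs_of_nonneg (by positivity)
  rw [e3, abs_neg]
  have h4 : (1:ℝ)/2 ≤ 1 - |x| := by linarith
  have h5 : (0:ℝ) < 1 - |x| := by linarith
  rw [div_le_iff₀ h5]
  nlinarith [pow_nonneg (abs_nonneg x) 6, sq_nonneg x, pow_nonneg (sq_nonneg x) 3]

lemma central_bound (θ : ℝ) (hθ0 : 0 < θ) (n k : ℕ) (hμ2 : 2 ≤ θ*(n:ℝ))
    (hclose : |(k:ℝ) - θ*(n:ℝ)| ≤ θ*(n:ℝ)/2) :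
    |Real.log (k:ℝ) - Real.log (θ*(n:ℝ)) - gp θ n k|
      ≤ 2*(((k:ℝ) - θ*(n:ℝ))/(θ*(n:ℝ)))^6 := by
  have hμpos : (0:ℝ) < θ*(n:ℝ) := by linarith
  have habs := abs_le.1 hclose
  have hk1 : (1:ℝ) ≤ (k:ℝ) := by
    have h1 : θ*(n:ℝ)/2 ≤ (k:ℝ) := by linarith [habs.1]
    linarith
  have hkpos : (0:ℝ) < (k:ℝ) := by linarith
  set x : ℝ := ((k:ℝ) - θ*(n:ℝ))/(θ*(n:ℝ)) with hx
  have hxabs : |x| ≤ 1/2 := by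
    rw [hx, abs_div, abs_of_pos hμpos, div_le_iff₀ hμpos]
    linarith
  have hlog : Real.log (k:ℝ) - Real.log (θ*(n:ℝ)) = Real.log (1+x) := by
    rw [show (1:ℝ)+x = (k:ℝ)/(θ*(n:ℝ)) by rw [hx, one_add_div hμpos.ne']; ring]
    rw [Real.log_div (by linarith) (by linarith)]
  have hgp : gp θ n k = x - x^2/2 + x^3/3 - x^4/4 + x^5/5 := rfl
  rw [hlog, hgp]
  exact taylor_log x hxabs

lemma tail_bound (θ : ℝ) (hθ0 : 0 < θ) (hθ1 : θ < 1) (n k : ℕ) (hk : k ≤ n)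
    (hν1 : 1 ≤ (n:ℝ)) (hc : Real.log (1/θ) + 5/θ^5 ≤ (n:ℝ)) :
    |Real.log (k:ℝ) - Real.log (θ*(n:ℝ)) - gp θ n k| ≤ 3*(n:ℝ) := by
  have hνpos : (0:ℝ) < (n:ℝ) := by linarith
  have hμpos : (0:ℝ) < θ*(n:ℝ) := by positivity
  have hinv1 : (1:ℝ) ≤ 1/θ := by
    rw [le_div_iff₀ hθ0]; linarith
  set x : ℝ := ((k:ℝ) - θ*(n:ℝ))/(θ*(n:ℝ)) with hx
  have hkn : (k:ℝ) ≤ (n:ℝ) := Nat.cast_le.2 hk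
  have hk0 : (0:ℝ) ≤ (k:ℝ) := Nat.cast_nonneg k
  have hxabs : |x| ≤ 1/θ := by
    have e : 1/θ*(θ*(n:ℝ)) = (n:ℝ) := by field_simp
    have hμν : θ*(n:ℝ) ≤ (n:ℝ) := by nlinarith
    rw [hx, abs_div, abs_of_pos hμpos, div_le_iff₀ hμpos, abs_le]
    constructor
    · linarith [e, hμν, hk0]
    · linarith [e, hkn, hμpos]
  have hxj : ∀ j : ℕ, 1 ≤ j → j ≤ 5 → |x|^j ≤ 1/θ^5 := by
    intro j hj1 hj5
    have h1 : |x|^j ≤ (1/θ)^j := pow_le_pow_left₀ (abs_nonneg x) hxabs j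
    have h2 : (1/θ)^j ≤ (1/θ)^5 := pow_le_pow_right₀ hinv1 hj5
    have h3 : (1/θ)^5 = 1/θ^5 := by rw [div_pow, one_pow]
    linarith
  have hgp : |gp θ n k| ≤ 5/θ^5 := by
    have e : gp θ n k = x - x^2/2 + x^3/3 - x^4/4 + x^5/5 := rfl
    have t1 : |x|^1 ≤ 1/θ^5 := hxj 1 le_rfl (by norm_num)
    have t2 : |x|^2 ≤ 1/θ^5 := hxj 2 (by norm_num) (by norm_num)
    have t3 : |x|^3 ≤ 1/θ^5 := hxj 3 (by norm_num) (by norm_num)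
    have t4 : |x|^4 ≤ 1/θ^5 := hxj 4 (by norm_num) (by norm_num)
    have t5 : |x|^5 ≤ 1/θ^5 := hxj 5 (by norm_num) (by norm_num)
    have habs : |gp θ n k| ≤ |x|^1 + |x|^2/2 + |x|^3/3 + |x|^4/4 + |x|^5/5 := by
      have p1 : |x|^1 = |x| := pow_one _
      rw [e]
      have a1 : |x - x^2/2 + x^3/3 - x^4/4 + x^5/5| ≤ |x - x^2/2 + x^3/3 - x^4/4| + |x^5/5| :=
        abs_add_le _ _
      have a2 : |x - x^2/2 + x^3/3 - x^4/4| ≤ |x - x^2/2 + x^3/3| + |x^4/4| := abs_sub _ _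
      have a3 : |x - x^2/2 + x^3/3| ≤ |x - x^2/2| + |x^3/3| := abs_add_le _ _
      have a4 : |x - x^2/2| ≤ |x| + |x^2/2| := abs_sub _ _
      have b2 : |x^2/2| = |x|^2/2 := by rw [abs_div, abs_pow]; norm_num
      have b3 : |x^3/3| = |x|^3/3 := by rw [abs_div, abs_pow]; norm_num
      have b4 : |x^4/4| = |x|^4/4 := by rw [abs_div, abs_pow]; norm_num
      have b5 : |x^5/5| = |x|^5/5 := by rw [abs_div, abs_pow]; norm_num
      linarith
    have hu : (0:ℝ) ≤ 1/θ^5 := by positivity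
    set u : ℝ := 1/θ^5 with hudef
    rw [show (5:ℝ)/θ^5 = 5*u by rw [hudef]; ring]
    linarith
  have hlogk : |Real.log (k:ℝ)| ≤ (n:ℝ) := by
    rcases Nat.eq_zero_or_pos k with h0 | hpos
    · subst h0
      simp only [Nat.cast_zero, Real.log_zero, abs_zero]
      linarith
    · have hk1 : (1:ℝ) ≤ (k:ℝ) := by exact_mod_cast hpos
      rw [abs_of_nonneg (Real.log_nonneg hk1)]
      have := Real.log_le_sub_one_of_pos (by linarith : (0:ℝ) < (k:ℝ))
      linarith
  have hlogμ : |Real.log (θ*(n:ℝ))| ≤ Real.log (1/θ) + (n:ℝ) := by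
    rw [Real.log_mul (ne_of_gt hθ0) (ne_of_gt hνpos)]
    have h1 : |Real.log θ| = Real.log (1/θ) := by
      rw [one_div, Real.log_inv, abs_of_nonpos (Real.log_nonpos (le_of_lt hθ0) (le_of_lt hθ1))]
    have h2 : |Real.log (n:ℝ)| ≤ (n:ℝ) := by
      rw [abs_of_nonneg (Real.log_nonneg hν1)]
      linarith [Real.log_le_sub_one_of_pos hνpos]
    calc |Real.log θ + Real.log (n:ℝ)| ≤ |Real.log θ| + |Real.log (n:ℝ)| := abs_add_le _ _
      _ ≤ Real.log (1/θ) + (n:ℝ) := by linarith [h1, h2]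
  calc |Real.log (k:ℝ) - Real.log (θ*(n:ℝ)) - gp θ n k|
      ≤ |Real.log (k:ℝ) - Real.log (θ*(n:ℝ))| + |gp θ n k| := abs_sub _ _
    _ ≤ (|Real.log (k:ℝ)| + |Real.log (θ*(n:ℝ))|) + |gp θ n k| := by
        linarith [abs_sub (Real.log (k:ℝ)) (Real.log (θ*(n:ℝ)))]
    _ ≤ 3*(n:ℝ) := by
        have hl : (0:ℝ) ≤ Real.log (1/θ) := Real.log_nonneg hinv1
        linarith


/-- Flajolet: asymptotics of the Bernoulli sum with weight `ln k`
(the `k = 1` term contributes `0` since `Real.log 1 = 0`). -/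
theorem stmt_11 (θ : ℝ) (hθ : θ ∈ Set.Ioo (0 : ℝ) 1) :
    ∃ C : ℝ, 0 < C ∧ ∃ N : ℕ, ∀ n : ℕ, N ≤ n →
      |(∑ k ∈ Finset.Icc 1 n,
            (n.choose k : ℝ) * θ ^ k * (1 - θ) ^ (n - k) * Real.log (k : ℝ)) -
          (Real.log (θ * (n : ℝ)) + (θ - 1) / (2 * θ * (n : ℝ)) -
            (θ ^ 2 - 6 * θ + 5) / (12 * θ ^ 2 * (n : ℝ) ^ 2))| ≤ C / (n : ℝ) ^ 3 := by
  classical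
  obtain ⟨hθ0, hθ1⟩ := hθ
  have hθne : θ ≠ 0 := ne_of_gt hθ0
  refine ⟨48/θ^5 + 4684/θ^6 + 209601024/θ^8, by positivity,
    ⌈2/θ + (Real.log (1/θ) + 5/θ^5) + 1⌉₊, ?_⟩
  intro n hn
  have hpq : θ + (1 - θ) = 1 := by ring
  have hinv1 : (1:ℝ) ≤ 1/θ := by rw [le_div_iff₀ hθ0]; linarith
  have hlog1θ : 0 ≤ Real.log (1/θ) := Real.log_nonneg hinv1
  have h2θ : (0:ℝ) < 2/θ := by positivity
  have hθ5 : (0:ℝ) < 5/θ^5 := by positivity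
  have hNreal : 2/θ + (Real.log (1/θ) + 5/θ^5) + 1 ≤ (n:ℝ) := by
    have h1 := Nat.le_ceil (2/θ + (Real.log (1/θ) + 5/θ^5) + 1)
    have h2 : ((⌈2/θ + (Real.log (1/θ) + 5/θ^5) + 1⌉₊ : ℕ) : ℝ) ≤ (n:ℝ) := Nat.cast_le.2 hn
    linarith
  have hν1 : (1:ℝ) ≤ (n:ℝ) := by linarith
  have hνpos : (0:ℝ) < (n:ℝ) := by linarith
  have hνne : ((n:ℝ)) ≠ 0 := ne_of_gt hνpos
  have hν2θ : 2/θ ≤ (n:ℝ) := by linarith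
  have hμ2 : (2:ℝ) ≤ θ*(n:ℝ) := by
    have h1 := mul_le_mul_of_nonneg_left hν2θ (le_of_lt hθ0)
    have e : θ*(2/θ) = 2 := by field_simp
    linarith
  have hμpos : (0:ℝ) < θ*(n:ℝ) := by linarith
  have hμne : θ*(n:ℝ) ≠ 0 := ne_of_gt hμpos
  have hc : Real.log (1/θ) + 5/θ^5 ≤ (n:ℝ) := by linarith
  have hb : ∀ k, 0 ≤ bwt θ n k := by
    intro k
    unfold bwt
    have h1 : (0:ℝ) ≤ 1 - θ := by linarith
    positivity
  have hp5 := sum_p5 θ (1-θ) hpq n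
  have hm6s := sum_c6 θ (1-θ) hpq n
  have hm8s := sum_c8 θ (1-θ) hpq n
  have hone : ∑ k ∈ range (n+1), bwt θ n k = 1 := by
    have h := sumF θ (1-θ) hpq n 0
    simpa [bwt] using h
  have hS : (∑ k ∈ Finset.Icc 1 n,
        (n.choose k : ℝ) * θ ^ k * (1 - θ) ^ (n - k) * Real.log (k : ℝ))
      = ∑ k ∈ range (n+1), bwt θ n k * Real.log (k:ℝ) := by
    refine Finset.sum_subset (fun k hk => ?_) (fun k hk hk2 => ?_)
    · simp only [Finset.mem_Icc] at hk
      exact Finset.mem_range.2 (by omega)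
    · simp only [Finset.mem_range] at hk
      simp only [Finset.mem_Icc, not_and, not_le] at hk2
      have hk0 : k = 0 := by omega
      subst hk0
      simp [bwt, Real.log_zero]
  have hgsum : ∑ k ∈ range (n+1), bwt θ n k * gp θ n k
      = (30*(n:ℝ)^4*θ^5 + (-30)*(n:ℝ)^4*θ^4 + (-5)*(n:ℝ)^3*θ^5 + 30*(n:ℝ)^3*θ^4 + (-25)*(n:ℝ)^3*θ^3 + (-150)*(n:ℝ)^2*θ^5 + 420*(n:ℝ)^2*θ^4 + (-375)*(n:ℝ)^2*θ^3 + 105*(n:ℝ)^2*θ^2 + 288*(n:ℝ)*θ^5 + (-720)*(n:ℝ)*θ^4 + 600*(n:ℝ)*θ^3 + (-180)*(n:ℝ)*θ^2 + 12*(n:ℝ)*θ)/(60*(θ*(n:ℝ))^5) := by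
    have hper : ∀ k ∈ range (n+1), bwt θ n k * gp θ n k
        = (bwt θ n k * (60*(θ*(n:ℝ))^4*((k:ℝ) - θ*(n:ℝ)) - 30*(θ*(n:ℝ))^3*((k:ℝ) - θ*(n:ℝ))^2 + 20*(θ*(n:ℝ))^2*((k:ℝ) - θ*(n:ℝ))^3 - 15*(θ*(n:ℝ))*((k:ℝ) - θ*(n:ℝ))^4 + 12*((k:ℝ) - θ*(n:ℝ))^5))/(60*(θ*(n:ℝ))^5) := by
      intro k _
      unfold gp
      rw [eq_div_iff (by positivity)]
      field_simp
      ring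
    rw [Finset.sum_congr rfl hper, ← Finset.sum_div]
    rw [show ∑ k ∈ range (n+1), bwt θ n k * (60*(θ*(n:ℝ))^4*((k:ℝ) - θ*(n:ℝ)) - 30*(θ*(n:ℝ))^3*((k:ℝ) - θ*(n:ℝ))^2 + 20*(θ*(n:ℝ))^2*((k:ℝ) - θ*(n:ℝ))^3 - 15*(θ*(n:ℝ))*((k:ℝ) - θ*(n:ℝ))^4 + 12*((k:ℝ) - θ*(n:ℝ))^5) = 30*(n:ℝ)^4*θ^5 + (-30)*(n:ℝ)^4*θ^4 + (-5)*(n:ℝ)^3*θ^5 + 30*(n:ℝ)^3*θ^4 + (-25)*(n:ℝ)^3*θ^3 + (-150)*(n:ℝ)^2*θ^5 + 420*(n:ℝ)^2*θ^4 + (-375)*(n:ℝ)^2*θ^3 + 105*(n:ℝ)^2*θ^2 + 288*(n:ℝ)*θ^5 + (-720)*(n:ℝ)*θ^4 + 600*(n:ℝ)*θ^3 + (-180)*(n:ℝ)*θ^2 + 12*(n:ℝ)*θ from by simp only [bwt]; exact hp5]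
  have hkey : (30*(n:ℝ)^4*θ^5 + (-30)*(n:ℝ)^4*θ^4 + (-5)*(n:ℝ)^3*θ^5 + 30*(n:ℝ)^3*θ^4 + (-25)*(n:ℝ)^3*θ^3 + (-150)*(n:ℝ)^2*θ^5 + 420*(n:ℝ)^2*θ^4 + (-375)*(n:ℝ)^2*θ^3 + 105*(n:ℝ)^2*θ^2 + 288*(n:ℝ)*θ^5 + (-720)*(n:ℝ)*θ^4 + 600*(n:ℝ)*θ^3 + (-180)*(n:ℝ)*θ^2 + 12*(n:ℝ)*θ)/(60*(θ*(n:ℝ))^5)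
        - ((θ-1)/(2*θ*(n:ℝ)) - (θ^2 - 6*θ + 5)/(12*θ^2*(n:ℝ)^2))
      = ((-150)*(n:ℝ)^2*θ^5 + 420*(n:ℝ)^2*θ^4 + (-375)*(n:ℝ)^2*θ^3 + 105*(n:ℝ)^2*θ^2 + 288*(n:ℝ)*θ^5 + (-720)*(n:ℝ)*θ^4 + 600*(n:ℝ)*θ^3 + (-180)*(n:ℝ)*θ^2 + 12*(n:ℝ)*θ)/(60*θ^5*(n:ℝ)^5) := by
    field_simp
    ring
  have hnum := num_bound θ (n:ℝ) hθ0 hθ1 hν1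
  have hE2 : |(∑ k ∈ range (n+1), bwt θ n k * gp θ n k)
      - ((θ-1)/(2*θ*(n:ℝ)) - (θ^2 - 6*θ + 5)/(12*θ^2*(n:ℝ)^2))| ≤ (48/θ^5)/(n:ℝ)^3 := by
    rw [hgsum, hkey, abs_div, abs_of_pos (show (0:ℝ) < 60*θ^5*(n:ℝ)^5 by positivity)]
    rw [div_le_div_iff₀ (by positivity) (by positivity)]
    have hmono : |(-150)*(n:ℝ)^2*θ^5 + 420*(n:ℝ)^2*θ^4 + (-375)*(n:ℝ)^2*θ^3 + 105*(n:ℝ)^2*θ^2 + 288*(n:ℝ)*θ^5 + (-720)*(n:ℝ)*θ^4 + 600*(n:ℝ)*θ^3 + (-180)*(n:ℝ)*θ^2 + 12*(n:ℝ)*θ| * ((n:ℝ)^3) ≤ (2850*(n:ℝ)^2)*((n:ℝ)^3) :=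
      mul_le_mul_of_nonneg_right hnum (by positivity)
    have e : (48/θ^5)*(60*θ^5*(n:ℝ)^5) = 2880*(n:ℝ)^2*(n:ℝ)^3 := by
      field_simp
      ring
    rw [e]
    nlinarith [hmono, mul_pos (pow_pos hνpos 2) (pow_pos hνpos 3)]
  have hm6s' : ∑ k ∈ range (n+1), bwt θ n k * (((k:ℝ) - θ*(n:ℝ))^6) = ((-15)*(n:ℝ)^3*θ^6 + 45*(n:ℝ)^3*θ^5 + (-45)*(n:ℝ)^3*θ^4 + 15*(n:ℝ)^3*θ^3 + 130*(n:ℝ)^2*θ^6 + (-390)*(n:ℝ)^2*θ^5 + 415*(n:ℝ)^2*θ^4 + (-180)*(n:ℝ)^2*θ^3 + 25*(n:ℝ)^2*θ^2 + (-120)*(n:ℝ)*θ^6 + 360*(n:ℝ)*θ^5 + (-390)*(n:ℝ)*θ^4 + 180*(n:ℝ)*θ^3 + (-31)*(n:ℝ)*θ^2 + 1*(n:ℝ)*θ) := by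
    simp only [bwt]
    exact hm6s
  have hm8s' : ∑ k ∈ range (n+1), bwt θ n k * (((k:ℝ) - θ*(n:ℝ))^8) = (105*(n:ℝ)^4*θ^8 + (-420)*(n:ℝ)^4*θ^7 + 630*(n:ℝ)^4*θ^6 + (-420)*(n:ℝ)^4*θ^5 + 105*(n:ℝ)^4*θ^4 + (-2380)*(n:ℝ)^3*θ^8 + 9520*(n:ℝ)^3*θ^7 + (-14770)*(n:ℝ)^3*θ^6 + 10990*(n:ℝ)^3*θ^5 + (-3850)*(n:ℝ)^3*θ^4 + 490*(n:ℝ)^3*θ^3 + 7308*(n:ℝ)^2*θ^8 + (-29232)*(n:ℝ)^2*θ^7 + 46004*(n:ℝ)^2*θ^6 + (-35700)*(n:ℝ)^2*θ^5 + 13895*(n:ℝ)^2*θ^4 + (-2394)*(n:ℝ)^2*θ^3 + 119*(n:ℝ)^2*θ^2 + (-5040)*(n:ℝ)*θ^8 + 20160*(n:ℝ)*θ^7 + (-31920)*(n:ℝ)*θ^6 + 25200*(n:ℝ)*θ^5 + (-10206)*(n:ℝ)*θ^4 + 1932*(n:ℝ)*θ^3 + (-127)*(n:ℝ)*θ^2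 + 1*(n:ℝ)*θ) := by
    simp only [bwt]
    exact hm8s
  have hcent : ∑ k ∈ (range (n+1)).filter (fun k : ℕ => |(k:ℝ) - θ*(n:ℝ)| ≤ θ*(n:ℝ)/2), bwt θ n k * |Real.log (k:ℝ) - Real.log (θ*(n:ℝ)) - gp θ n k|
      ≤ (4684/θ^6)/(n:ℝ)^3 := by
    have s1 : ∑ k ∈ (range (n+1)).filter (fun k : ℕ => |(k:ℝ) - θ*(n:ℝ)| ≤ θ*(n:ℝ)/2), bwt θ n k * |Real.log (k:ℝ) - Real.log (θ*(n:ℝ)) - gp θ n k|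
        ≤ ∑ k ∈ (range (n+1)).filter (fun k : ℕ => |(k:ℝ) - θ*(n:ℝ)| ≤ θ*(n:ℝ)/2), bwt θ n k * (2*(((k:ℝ) - θ*(n:ℝ))/(θ*(n:ℝ)))^6) :=
      Finset.sum_le_sum (fun k hk => mul_le_mul_of_nonneg_left
        (central_bound θ hθ0 n k hμ2 (Finset.mem_filter.1 hk).2) (hb k))
    have s2 : ∑ k ∈ (range (n+1)).filter (fun k : ℕ => |(k:ℝ) - θ*(n:ℝ)| ≤ θ*(n:ℝ)/2), bwt θ n k * (2*(((k:ℝ) - θ*(n:ℝ))/(θ*(n:ℝ)))^6)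
        ≤ ∑ k ∈ range (n+1), bwt θ n k * (2*(((k:ℝ) - θ*(n:ℝ))/(θ*(n:ℝ)))^6) :=
      Finset.sum_le_sum_of_subset_of_nonneg (Finset.filter_subset _ _)
        (fun k _ _ => mul_nonneg (hb k) (by positivity))
    have s3 : ∑ k ∈ range (n+1), bwt θ n k * (2*(((k:ℝ) - θ*(n:ℝ))/(θ*(n:ℝ)))^6)
        = (2/(θ*(n:ℝ))^6) * ((-15)*(n:ℝ)^3*θ^6 + 45*(n:ℝ)^3*θ^5 + (-45)*(n:ℝ)^3*θ^4 + 15*(n:ℝ)^3*θ^3 + 130*(n:ℝ)^2*θ^6 + (-390)*(n:ℝ)^2*θ^5 + 415*(n:ℝ)^2*θ^4 + (-180)*(n:ℝ)^2*θ^3 + 25*(n:ℝ)^2*θ^2 + (-120)*(n:ℝ)*θ^6 + 360*(n:ℝ)*θ^5 + (-390)*(n:ℝ)*θ^4 + 180*(n:ℝ)*θ^3 + (-31)*(n:ℝ)*θ^2 + 1*(n:ℝ)*θ) := by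
      rw [show ((-15)*(n:ℝ)^3*θ^6 + 45*(n:ℝ)^3*θ^5 + (-45)*(n:ℝ)^3*θ^4 + 15*(n:ℝ)^3*θ^3 + 130*(n:ℝ)^2*θ^6 + (-390)*(n:ℝ)^2*θ^5 + 415*(n:ℝ)^2*θ^4 + (-180)*(n:ℝ)^2*θ^3 + 25*(n:ℝ)^2*θ^2 + (-120)*(n:ℝ)*θ^6 + 360*(n:ℝ)*θ^5 + (-390)*(n:ℝ)*θ^4 + 180*(n:ℝ)*θ^3 + (-31)*(n:ℝ)*θ^2 + 1*(n:ℝ)*θ) = ∑ k ∈ range (n+1), bwt θ n k * (((k:ℝ) - θ*(n:ℝ))^6) from hm6s'.symm]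
      rw [Finset.mul_sum]
      refine Finset.sum_congr rfl (fun k _ => ?_)
      have h6 : ((θ*(n:ℝ)))^6 ≠ 0 := pow_ne_zero _ hμne
      field_simp
    have hm6b := m6_bound θ (n:ℝ) hθ0 hθ1 hν1
    have s4 : (2/(θ*(n:ℝ))^6) * ((-15)*(n:ℝ)^3*θ^6 + 45*(n:ℝ)^3*θ^5 + (-45)*(n:ℝ)^3*θ^4 + 15*(n:ℝ)^3*θ^3 + 130*(n:ℝ)^2*θ^6 + (-390)*(n:ℝ)^2*θ^5 + 415*(n:ℝ)^2*θ^4 + (-180)*(n:ℝ)^2*θ^3 + 25*(n:ℝ)^2*θ^2 + (-120)*(n:ℝ)*θ^6 + 360*(n:ℝ)*θ^5 + (-390)*(n:ℝ)*θ^4 + 180*(n:ℝ)*θ^3 + (-31)*(n:ℝ)*θ^2 + 1*(n:ℝ)*θ) ≤ (2/(θ*(n:ℝ))^6) * (2342*(n:ℝ)^3) :=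
      mul_le_mul_of_nonneg_left (le_trans (le_abs_self _) hm6b) (by positivity)
    have s5 : (2/(θ*(n:ℝ))^6) * (2342*(n:ℝ)^3) = (4684/θ^6)/(n:ℝ)^3 := by
      field_simp
      ring
    linarith
  have htail : ∑ k ∈ (range (n+1)).filter (fun k : ℕ => ¬ |(k:ℝ) - θ*(n:ℝ)| ≤ θ*(n:ℝ)/2), bwt θ n k * |Real.log (k:ℝ) - Real.log (θ*(n:ℝ)) - gp θ n k|
      ≤ (209601024/θ^8)/(n:ℝ)^3 := by
    have s1 : ∑ k ∈ (range (n+1)).filter (fun k : ℕ => ¬ |(k:ℝ) - θ*(n:ℝ)| ≤ θ*(n:ℝ)/2), bwt θ n k * |Real.log (k:ℝ) - Real.log (θ*(n:ℝ)) - gp θ n k|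
        ≤ ∑ k ∈ (range (n+1)).filter (fun k : ℕ => ¬ |(k:ℝ) - θ*(n:ℝ)| ≤ θ*(n:ℝ)/2), bwt θ n k * (3*(n:ℝ)) :=
      Finset.sum_le_sum (fun k hk => mul_le_mul_of_nonneg_left
        (tail_bound θ hθ0 hθ1 n k
          (Nat.lt_succ_iff.1 (Finset.mem_range.1 (Finset.mem_filter.1 hk).1)) hν1 hc) (hb k))
    have s2 : ∑ k ∈ (range (n+1)).filter (fun k : ℕ => ¬ |(k:ℝ) - θ*(n:ℝ)| ≤ θ*(n:ℝ)/2), bwt θ n k * (3*(n:ℝ))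
        = (∑ k ∈ (range (n+1)).filter (fun k : ℕ => ¬ |(k:ℝ) - θ*(n:ℝ)| ≤ θ*(n:ℝ)/2), bwt θ n k) * (3*(n:ℝ)) := by
      rw [Finset.sum_mul]
    have s3 : (∑ k ∈ (range (n+1)).filter (fun k : ℕ => ¬ |(k:ℝ) - θ*(n:ℝ)| ≤ θ*(n:ℝ)/2), bwt θ n k)
        ≤ ∑ k ∈ (range (n+1)).filter (fun k : ℕ => ¬ |(k:ℝ) - θ*(n:ℝ)| ≤ θ*(n:ℝ)/2), bwt θ n k * ((2*((k:ℝ) - θ*(n:ℝ))/(θ*(n:ℝ)))^8) := by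
      refine Finset.sum_le_sum (fun k hk => ?_)
      have hfar := (Finset.mem_filter.1 hk).2
      push_neg at hfar
      have h1 : 1 ≤ |2*((k:ℝ) - θ*(n:ℝ))/(θ*(n:ℝ))| := by
        rw [abs_div, abs_of_pos hμpos, le_div_iff₀ hμpos, abs_mul, abs_two]
        linarith
      have h2 : 1 ≤ ((2*((k:ℝ) - θ*(n:ℝ))/(θ*(n:ℝ)))^8) := by
        calc (1:ℝ) = 1^8 := by norm_num
          _ ≤ |2*((k:ℝ) - θ*(n:ℝ))/(θ*(n:ℝ))|^8 := pow_le_pow_left₀ (by norm_num) h1 8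
          _ = ((2*((k:ℝ) - θ*(n:ℝ))/(θ*(n:ℝ)))^8) := by
              rw [← abs_pow]
              exact abs_of_nonneg (by positivity)
      exact le_mul_of_one_le_right (hb k) h2
    have s4 : ∑ k ∈ (range (n+1)).filter (fun k : ℕ => ¬ |(k:ℝ) - θ*(n:ℝ)| ≤ θ*(n:ℝ)/2), bwt θ n k * ((2*((k:ℝ) - θ*(n:ℝ))/(θ*(n:ℝ)))^8)
        ≤ ∑ k ∈ range (n+1), bwt θ n k * ((2*((k:ℝ) - θ*(n:ℝ))/(θ*(n:ℝ)))^8) :=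
      Finset.sum_le_sum_of_subset_of_nonneg (Finset.filter_subset _ _)
        (fun k _ _ => mul_nonneg (hb k) (by positivity))
    have s5 : ∑ k ∈ range (n+1), bwt θ n k * ((2*((k:ℝ) - θ*(n:ℝ))/(θ*(n:ℝ)))^8)
        = (256/(θ*(n:ℝ))^8) * (105*(n:ℝ)^4*θ^8 + (-420)*(n:ℝ)^4*θ^7 + 630*(n:ℝ)^4*θ^6 + (-420)*(n:ℝ)^4*θ^5 + 105*(n:ℝ)^4*θ^4 + (-2380)*(n:ℝ)^3*θ^8 + 9520*(n:ℝ)^3*θ^7 + (-14770)*(n:ℝ)^3*θ^6 + 10990*(n:ℝ)^3*θ^5 + (-3850)*(n:ℝ)^3*θ^4 + 490*(n:ℝ)^3*θ^3 + 7308*(n:ℝ)^2*θ^8 + (-29232)*(n:ℝ)^2*θ^7 + 46004*(n:ℝ)^2*θ^6 + (-35700)*(n:ℝ)^2*θ^5 + 13895*(n:ℝ)^2*θ^4 + (-2394)*(n:ℝ)^2*θ^3 + 119*(n:ℝ)^2*θ^2 + (-5040)*(n:ℝ)*θ^8 + 20160*(n:ℝ)*θ^7 + (-31920)*(n:ℝ)*θ^6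 + 25200*(n:ℝ)*θ^5 + (-10206)*(n:ℝ)*θ^4 + 1932*(n:ℝ)*θ^3 + (-127)*(n:ℝ)*θ^2 + 1*(n:ℝ)*θ) := by
      rw [show (105*(n:ℝ)^4*θ^8 + (-420)*(n:ℝ)^4*θ^7 + 630*(n:ℝ)^4*θ^6 + (-420)*(n:ℝ)^4*θ^5 + 105*(n:ℝ)^4*θ^4 + (-2380)*(n:ℝ)^3*θ^8 + 9520*(n:ℝ)^3*θ^7 + (-14770)*(n:ℝ)^3*θ^6 + 10990*(n:ℝ)^3*θ^5 + (-3850)*(n:ℝ)^3*θ^4 + 490*(n:ℝ)^3*θ^3 + 7308*(n:ℝ)^2*θ^8 + (-29232)*(n:ℝ)^2*θ^7 + 46004*(n:ℝ)^2*θ^6 + (-35700)*(n:ℝ)^2*θ^5 + 13895*(n:ℝ)^2*θ^4 + (-2394)*(n:ℝ)^2*θ^3 + 119*(n:ℝ)^2*θ^2 + (-5040)*(n:ℝ)*θ^8 + 20160*(n:ℝ)*θ^7 + (-31920)*(n:ℝ)*θ^6 + 25200*(n:ℝ)*θ^5 + (-10206)*(n:ℝ)*θ^4 + 1932*(n:ℝ)*θ^3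 + (-127)*(n:ℝ)*θ^2 + 1*(n:ℝ)*θ) = ∑ k ∈ range (n+1), bwt θ n k * (((k:ℝ) - θ*(n:ℝ))^8) from hm8s'.symm]
      rw [Finset.mul_sum]
      refine Finset.sum_congr rfl (fun k _ => ?_)
      have h8 : ((θ*(n:ℝ)))^8 ≠ 0 := pow_ne_zero _ hμne
      field_simp
      ring
    have hm8b := m8_bound θ (n:ℝ) hθ0 hθ1 hν1
    have s6 : (256/(θ*(n:ℝ))^8) * (105*(n:ℝ)^4*θ^8 + (-420)*(n:ℝ)^4*θ^7 + 630*(n:ℝ)^4*θ^6 + (-420)*(n:ℝ)^4*θ^5 + 105*(n:ℝ)^4*θ^4 + (-2380)*(n:ℝ)^3*θ^8 + 9520*(n:ℝ)^3*θ^7 + (-14770)*(n:ℝ)^3*θ^6 + 10990*(n:ℝ)^3*θ^5 + (-3850)*(n:ℝ)^3*θ^4 + 490*(n:ℝ)^3*θ^3 + 7308*(n:ℝ)^2*θ^8 + (-29232)*(n:ℝ)^2*θ^7 + 46004*(n:ℝ)^2*θ^6 + (-35700)*(n:ℝ)^2*θ^5 + 13895*(n:ℝ)^2*θ^4 + (-2394)*(n:ℝ)^2*θ^3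 + 119*(n:ℝ)^2*θ^2 + (-5040)*(n:ℝ)*θ^8 + 20160*(n:ℝ)*θ^7 + (-31920)*(n:ℝ)*θ^6 + 25200*(n:ℝ)*θ^5 + (-10206)*(n:ℝ)*θ^4 + 1932*(n:ℝ)*θ^3 + (-127)*(n:ℝ)*θ^2 + 1*(n:ℝ)*θ) ≤ (256/(θ*(n:ℝ))^8) * (272918*(n:ℝ)^4) :=
      mul_le_mul_of_nonneg_left (le_trans (le_abs_self _) hm8b) (by positivity)
    have s9 : (∑ k ∈ (range (n+1)).filter (fun k : ℕ => ¬ |(k:ℝ) - θ*(n:ℝ)| ≤ θ*(n:ℝ)/2), bwt θ n k) ≤ (256/(θ*(n:ℝ))^8) * (272918*(n:ℝ)^4) := by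
      calc (∑ k ∈ (range (n+1)).filter (fun k : ℕ => ¬ |(k:ℝ) - θ*(n:ℝ)| ≤ θ*(n:ℝ)/2), bwt θ n k)
          ≤ ∑ k ∈ (range (n+1)).filter (fun k : ℕ => ¬ |(k:ℝ) - θ*(n:ℝ)| ≤ θ*(n:ℝ)/2), bwt θ n k * ((2*((k:ℝ) - θ*(n:ℝ))/(θ*(n:ℝ)))^8) := s3
        _ ≤ ∑ k ∈ range (n+1), bwt θ n k * ((2*((k:ℝ) - θ*(n:ℝ))/(θ*(n:ℝ)))^8) := s4
        _ = (256/(θ*(n:ℝ))^8) * (105*(n:ℝ)^4*θ^8 + (-420)*(n:ℝ)^4*θ^7 + 630*(n:ℝ)^4*θ^6 + (-420)*(n:ℝ)^4*θ^5 + 105*(n:ℝ)^4*θ^4 + (-2380)*(n:ℝ)^3*θ^8 + 9520*(n:ℝ)^3*θ^7 + (-14770)*(n:ℝ)^3*θ^6 + 10990*(n:ℝ)^3*θ^5 + (-3850)*(n:ℝ)^3*θ^4 + 490*(n:ℝ)^3*θ^3 + 7308*(n:ℝ)^2*θ^8 + (-29232)*(n:ℝ)^2*θ^7 + 46004*(n:ℝ)^2*θ^6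 + (-35700)*(n:ℝ)^2*θ^5 + 13895*(n:ℝ)^2*θ^4 + (-2394)*(n:ℝ)^2*θ^3 + 119*(n:ℝ)^2*θ^2 + (-5040)*(n:ℝ)*θ^8 + 20160*(n:ℝ)*θ^7 + (-31920)*(n:ℝ)*θ^6 + 25200*(n:ℝ)*θ^5 + (-10206)*(n:ℝ)*θ^4 + 1932*(n:ℝ)*θ^3 + (-127)*(n:ℝ)*θ^2 + 1*(n:ℝ)*θ) := s5
        _ ≤ (256/(θ*(n:ℝ))^8) * (272918*(n:ℝ)^4) := s6
    have s8 : (∑ k ∈ (range (n+1)).filter (fun k : ℕ => ¬ |(k:ℝ) - θ*(n:ℝ)| ≤ θ*(n:ℝ)/2), bwt θ n k) * (3*(n:ℝ))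
        ≤ ((256/(θ*(n:ℝ))^8) * (272918*(n:ℝ)^4))*(3*(n:ℝ)) :=
      mul_le_mul_of_nonneg_right s9 (by positivity)
    have s7 : ((256/(θ*(n:ℝ))^8) * (272918*(n:ℝ)^4))*(3*(n:ℝ)) = (209601024/θ^8)/(n:ℝ)^3 := by
      field_simp
      ring
    linarith
  have habs1 : |∑ k ∈ range (n+1), bwt θ n k * (Real.log (k:ℝ) - Real.log (θ*(n:ℝ)) - gp θ n k)|
      ≤ ∑ k ∈ range (n+1), bwt θ n k * |Real.log (k:ℝ) - Real.log (θ*(n:ℝ)) - gp θ n k| := by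
    refine (Finset.abs_sum_le_sum_abs _ _).trans (Finset.sum_le_sum (fun k _ => ?_))
    rw [abs_mul, abs_of_nonneg (hb k)]
  have hsplitsum : ∑ k ∈ range (n+1), bwt θ n k * |Real.log (k:ℝ) - Real.log (θ*(n:ℝ)) - gp θ n k|
      = (∑ k ∈ (range (n+1)).filter (fun k : ℕ => |(k:ℝ) - θ*(n:ℝ)| ≤ θ*(n:ℝ)/2), bwt θ n k * |Real.log (k:ℝ) - Real.log (θ*(n:ℝ)) - gp θ n k|)
        + ∑ k ∈ (range (n+1)).filter (fun k : ℕ => ¬ |(k:ℝ) - θ*(n:ℝ)| ≤ θ*(n:ℝ)/2), bwt θ n k * |Real.log (k:ℝ) - Real.log (θ*(n:ℝ)) - gp θ n k| :=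
    (Finset.sum_filter_add_sum_filter_not _ _ _).symm
  have hE1 : |∑ k ∈ range (n+1), bwt θ n k * (Real.log (k:ℝ) - Real.log (θ*(n:ℝ)) - gp θ n k)|
      ≤ (4684/θ^6)/(n:ℝ)^3 + (209601024/θ^8)/(n:ℝ)^3 := by
    rw [hsplitsum] at habs1
    linarith
  have edist : ∑ k ∈ range (n+1), bwt θ n k * (Real.log (k:ℝ) - Real.log (θ*(n:ℝ)) - gp θ n k)
      = (∑ k ∈ range (n+1), bwt θ n k * Real.log (k:ℝ)) - Real.log (θ*(n:ℝ))
        - ∑ k ∈ range (n+1), bwt θ n k * gp θ n k := by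
    simp only [mul_sub]
    rw [Finset.sum_sub_distrib, Finset.sum_sub_distrib, ← Finset.sum_mul, hone, one_mul]
  rw [hS]
  have heq : (∑ k ∈ range (n+1), bwt θ n k * Real.log (k:ℝ))
        - (Real.log (θ * (n:ℝ)) + (θ - 1) / (2 * θ * (n:ℝ))
          - (θ ^ 2 - 6 * θ + 5) / (12 * θ ^ 2 * (n:ℝ) ^ 2))
      = (∑ k ∈ range (n+1), bwt θ n k * (Real.log (k:ℝ) - Real.log (θ*(n:ℝ)) - gp θ n k))
        + ((∑ k ∈ range (n+1), bwt θ n k * gp θ n k)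
          - ((θ-1)/(2*θ*(n:ℝ)) - (θ^2 - 6*θ + 5)/(12*θ^2*(n:ℝ)^2))) := by
    rw [edist]
    ring
  rw [heq]
  calc |(∑ k ∈ range (n+1), bwt θ n k * (Real.log (k:ℝ) - Real.log (θ*(n:ℝ)) - gp θ n k))
        + ((∑ k ∈ range (n+1), bwt θ n k * gp θ n k)
          - ((θ-1)/(2*θ*(n:ℝ)) - (θ^2 - 6*θ + 5)/(12*θ^2*(n:ℝ)^2)))|
      ≤ |∑ k ∈ range (n+1), bwt θ n k * (Real.log (k:ℝ) - Real.log (θ*(n:ℝ)) - gp θ n k)|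
        + |(∑ k ∈ range (n+1), bwt θ n k * gp θ n k)
          - ((θ-1)/(2*θ*(n:ℝ)) - (θ^2 - 6*θ + 5)/(12*θ^2*(n:ℝ)^2))| := abs_add_le _ _
    _ ≤ ((4684/θ^6)/(n:ℝ)^3 + (209601024/θ^8)/(n:ℝ)^3) + (48/θ^5)/(n:ℝ)^3 :=
        add_le_add hE1 hE2
    _ = (48/θ^5 + 4684/θ^6 + 209601024/θ^8)/(n:ℝ)^3 := by ring

end
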